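/- Let G be a communication graph and let H be its dependency graph, obtained by reversing all process arcs and making all communication arcs bidirectional. If H is acyclic, then no colouring sequence on G deadlocks (with zero tokens): every maximal colouring sequence completes. -/
import Mathlib


/-! Formal framework: communication graphs and the red/yellow/green colouring game
(Brodsky–Pedersen–Wagner, "On the Complexity of Buffer Allocation in Message Passing Systems"),
with receive-side token pools. -/

inductive Colour : Type
  | red | yellow | green
deriving DecidableEq

/-- A communication graph: vertices are partitioned into start/send/receive/end vertices,
`pred u v` means `u` is the component predecessor of `v` (a process arc `u → v`),
`matched u v` is a communication arc from send `u` to its matching receive `v`,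
`comp v` is the index of the process component of `v`, and `pos v` is the position
of `v` within its component chain. -/
structure CommGraph (V : Type) where
  isStart : V → Prop
  isSend : V → Prop
  isRecv : V → Prop
  isEnd : V → Prop
  pred : V → V → Prop
  matched : V → V → Prop
  comp : V → ℕ
  pos : V → ℕ

namespace CommGraph

variable {V : Type}

/-- An arc of the communication graph (process arc or communication arc). -/
def GArc (G : CommGraph V) (u v : V) : Prop := G.pred u v ∨ G.matched u v

/-- Well-formedness of a communication graph: the vertex kinds partition `V`,
components are chains (unique predecessors, positions increase along process arcs),
communication arcs go from sends to receives in different components and form a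
partial matching, and the graph is acyclic (arcs admit no infinite descent). -/
structure WF (G : CommGraph V) : Prop where
  kinds : ∀ v, G.isStart v ∨ G.isSend v ∨ G.isRecv v ∨ G.isEnd v
  start_not_send : ∀ v, G.isStart v → ¬ G.isSend v
  start_not_recv : ∀ v, G.isStart v → ¬ G.isRecv v
  start_not_end : ∀ v, G.isStart v → ¬ G.isEnd v
  send_not_recv : ∀ v, G.isSend v → ¬ G.isRecv v
  send_not_end : ∀ v, G.isSend v → ¬ G.isEnd v
  recv_not_end : ∀ v, G.isRecv v → ¬ G.isEnd v
  pred_unique : ∀ {u u' v}, G.pred u v → G.pred u' v → u = u'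
  pred_comp : ∀ {u v}, G.pred u v → G.comp u = G.comp v
  pred_pos : ∀ {u v}, G.pred u v → G.pos v = G.pos u + 1
  start_no_pred : ∀ {u v}, G.pred u v → ¬ G.isStart v
  has_pred : ∀ v, ¬ G.isStart v → ∃ u, G.pred u v
  matched_send : ∀ {u v}, G.matched u v → G.isSend u
  matched_recv : ∀ {u v}, G.matched u v → G.isRecv v
  matched_comp : ∀ {u v}, G.matched u v → G.comp u ≠ G.comp v
  matched_unique_left : ∀ {u u' v}, G.matched u v → G.matched u' v → u = u'
  matched_unique_right : ∀ {u v v'}, G.matched u v → G.matched u v' → v = v'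
  send_has_match : ∀ v, G.isSend v → ∃ w, G.matched v w
  recv_has_match : ∀ v, G.isRecv v → ∃ w, G.matched w v
  dag : WellFounded fun u v => G.GArc u v

end CommGraph

/-- A state of the colouring game: the colouring, which receive vertices currently
hold a token on their incident communication arc, and the number of available
tokens in each (per-process, receive-side) pool. -/
structure St (V : Type) where
  col : V → Colour
  tok : V → Bool
  pool : ℕ → ℕ

/-- The names of the colouring rules. -/
inductive Rule : Type
  | sendYel | recvYel | recvYelTok | sendGrn | recvGrn | endYel | endGrn
deriving DecidableEq

variable {V : Type}

/-- One move of the colouring game (receive-side buffering: the token used by the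
buffered-receive rule `recvYelTok` comes from the pool of the receiving component,
and is returned when the receive turns green). -/
inductive Step [DecidableEq V] (G : CommGraph V) : Rule → St V → St V → Prop
  | sendYel {s : St V} {v u : V} :
      G.isSend v → s.col v = .red → G.pred u v → s.col u = .green →
      Step G .sendYel s ⟨Function.update s.col v .yellow, s.tok, s.pool⟩
  | recvYel {s : St V} {v u w : V} :
      G.isRecv v → s.col v = .red → G.matched w v → s.col w = .yellow →
      G.pred u v → s.col u = .green →
      Step G .recvYel s ⟨Function.update s.col v .yellow, s.tok, s.pool⟩
  | recvYelTok {s : St V} {v w : V} :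
      G.isRecv v → s.col v = .red → G.matched w v → s.col w = .yellow →
      0 < s.pool (G.comp v) →
      Step G .recvYelTok s ⟨Function.update s.col v .yellow,
        Function.update s.tok v true,
        Function.update s.pool (G.comp v) (s.pool (G.comp v) - 1)⟩
  | sendGrn {s : St V} {v r : V} :
      G.isSend v → s.col v = .yellow → G.matched v r → s.col r = .yellow →
      Step G .sendGrn s ⟨Function.update s.col v .green, s.tok, s.pool⟩
  | recvGrn {s : St V} {v u w : V} :
      G.isRecv v → s.col v = .yellow → G.pred u v → s.col u = .green →
      G.matched w v → s.col w = .green →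
      Step G .recvGrn s ⟨Function.update s.col v .green,
        Function.update s.tok v false,
        if s.tok v then
          Function.update s.pool (G.comp v) (s.pool (G.comp v) + 1)
        else s.pool⟩
  | endYel {s : St V} {v u : V} :
      G.isEnd v → s.col v = .red → G.pred u v → s.col u = .green →
      Step G .endYel s ⟨Function.update s.col v .yellow, s.tok, s.pool⟩
  | endGrn {s : St V} {v : V} :
      G.isEnd v → s.col v = .yellow →
      Step G .endGrn s ⟨Function.update s.col v .green, s.tok, s.pool⟩

/-- `IsSeq G s l` : the list `l` of (rule, state) pairs is a valid colouring sequence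
starting from state `s`. -/
def IsSeq [DecidableEq V] (G : CommGraph V) : St V → List (Rule × St V) → Prop
  | _, [] => True
  | s, p :: l => Step G p.1 s p.2 ∧ IsSeq G p.2 l

/-- The list of states visited by a colouring sequence. -/
def states (s0 : St V) (l : List (Rule × St V)) : List (St V) :=
  s0 :: l.map Prod.snd

/-- The final state of a colouring sequence. -/
def finalSt (s0 : St V) (l : List (Rule × St V)) : St V :=
  (states s0 l).getLast (by simp [states])

open Classical in
/-- The initial state: start vertices green, all others red, no tokens placed,
token pools given by the token assignment `B` (pool of component `i` holds `B i`). -/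
noncomputable def init (G : CommGraph V) (B : ℕ → ℕ) : St V :=
  ⟨fun v => if G.isStart v then Colour.green else Colour.red, fun _ => false, B⟩

/-- A state from which no colouring rule applies. -/
def MaximalFrom [DecidableEq V] (G : CommGraph V) (s : St V) : Prop :=
  ∀ ρ t, ¬ Step G ρ s t

/-- A state is complete when every vertex is green. -/
def Completes (s : St V) : Prop := ∀ v, s.col v = Colour.green

/-- A deadlocking colouring sequence from `s0`: a maximal sequence whose final
colouring has a non-green vertex. -/
def Deadlocks [DecidableEq V] (G : CommGraph V) (s0 : St V) (l : List (Rule × St V)) : Prop :=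
  IsSeq G s0 l ∧ MaximalFrom G (finalSt s0 l) ∧ ¬ Completes (finalSt s0 l)

/-- The system is safe (deadlock free) under token assignment `B`:
every maximal colouring sequence completes. -/
def DeadlockFree [DecidableEq V] (G : CommGraph V) (B : ℕ → ℕ) : Prop :=
  ∀ l, IsSeq G (init G B) l → MaximalFrom G (finalSt (init G B) l) →
    Completes (finalSt (init G B) l)

/-- A state blocks: some yellow send has a matching red receive to which the
buffered-receive rule cannot be applied (no token available). -/
def Blocked (G : CommGraph V) (s : St V) : Prop :=
  ∃ v r, G.matched v r ∧ s.col v = Colour.yellow ∧ s.col r = Colour.red ∧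
    s.pool (G.comp r) = 0

/-- The graph is block free under token assignment `B`: no colouring sequence blocks. -/
def BlockFree [DecidableEq V] (G : CommGraph V) (B : ℕ → ℕ) : Prop :=
  ∀ l, IsSeq G (init G B) l → ¬ Blocked G (finalSt (init G B) l)


/-- An edge of the dependency graph `H` of `G`: process arcs reversed,
communication arcs made bidirectional. -/
def HStep {V : Type} (G : CommGraph V) (u v : V) : Prop :=
  G.pred v u ∨ G.matched u v ∨ G.matched v u

/-- A cycle in the dependency graph: a nonempty periodic closed walk along `HStep`
edges that never immediately retraverses a communication arc in the opposite
direction (so the trivial back-and-forth over one bidirectional communication arc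
does not count as a cycle). -/
def DepCycle {V : Type} (G : CommGraph V) : Prop :=
  ∃ (k : ℕ) (c : ℕ → V), 0 < k ∧ (∀ i, c (i + k) = c i) ∧
    (∀ i, HStep G (c i) (c (i + 1))) ∧
    (∀ i, ¬ (c (i + 2) = c i ∧ (G.matched (c i) (c (i + 1)) ∨ G.matched (c (i + 1)) (c i))))

section AcyclicProof

variable {V : Type} [DecidableEq V]

/-- The invariant maintained along every colouring sequence from the zero-token
initial state. -/
def ColInv (G : CommGraph V) (s : St V) : Prop :=
  (∀ v, G.isStart v → s.col v = .green) ∧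
  (∀ i, s.pool i = 0) ∧
  (∀ v, s.tok v = false) ∧
  (∀ v u, G.isRecv v → s.col v ≠ .red → G.pred u v → s.col u = .green) ∧
  (∀ v w, G.isRecv v → s.col v ≠ .red → G.matched w v → s.col w ≠ .red) ∧
  (∀ v r, G.isSend v → s.col v = .green → G.matched v r → s.col r ≠ .red) ∧
  (∀ v w, G.isRecv v → s.col v = .green → G.matched w v → s.col w = .green)

private lemma upd_ne_red {f : V → Colour} {z : V} {c : Colour} (hc : c ≠ .red) :
    ∀ x, f x ≠ .red → Function.update f z c x ≠ .red := by
  intro x hx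
  rcases eq_or_ne x z with rfl | h
  · simpa using hc
  · rwa [Function.update_of_ne h]

private lemma upd_green {f : V → Colour} {z : V} {c : Colour}
    (hz : f z ≠ .green ∨ c = .green) :
    ∀ x, f x = .green → Function.update f z c x = .green := by
  intro x hx
  rcases eq_or_ne x z with rfl | h
  · rcases hz with h | rfl
    · exact absurd hx h
    · simp
  · rwa [Function.update_of_ne h]

private lemma finalSt_cons (s : St V) (p : Rule × St V) (l : List (Rule × St V)) :
    finalSt s (p :: l) = finalSt p.2 l := by
  simp only [finalSt, states, List.map_cons]
  rw [List.getLast_cons (by simp)]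

private lemma inv_init (G : CommGraph V) (hwf : G.WF) : ColInv G (init G fun _ => 0) := by
  refine ⟨?_, fun _ => rfl, fun _ => rfl, ?_, ?_, ?_, ?_⟩
  · intro v hv; simp [init, hv]
  · intro v u hrcv hnr _
    have hns : ¬ G.isStart v := fun h => hwf.start_not_recv v h hrcv
    exact absurd (by simp [init, hns]) hnr
  · intro v w hrcv hnr _
    have hns : ¬ G.isStart v := fun h => hwf.start_not_recv v h hrcv
    exact absurd (by simp [init, hns]) hnr
  · intro v r hsd hg _
    have hns : ¬ G.isStart v := fun h => hwf.start_not_send v h hsd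
    have : (init G fun _ => 0).col v = Colour.red := by simp [init, hns]
    rw [this] at hg; exact absurd hg (by decide)
  · intro v w hrcv hg _
    have hns : ¬ G.isStart v := fun h => hwf.start_not_recv v h hrcv
    have : (init G fun _ => 0).col v = Colour.red := by simp [init, hns]
    rw [this] at hg; exact absurd hg (by decide)

private lemma inv_step (G : CommGraph V) (hwf : G.WF) {ρ : Rule} {s t : St V}
    (hI : ColInv G s) (h : Step G ρ s t) : ColInv G t := by
  obtain ⟨hA, hB, hB', hC, hD, hE, hF⟩ := hI
  cases h with
  | sendYel hsd hred hp hg =>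
    rename_i v u
    have hzg : s.col v ≠ Colour.green := by rw [hred]; decide
    have hgrn := upd_green (f := s.col) (z := v) (c := .yellow) (Or.inl hzg)
    have hnr := upd_ne_red (f := s.col) (z := v) (c := .yellow) (by decide)
    refine ⟨fun x hx => hgrn x (hA x hx), hB, hB', ?_, ?_, ?_, ?_⟩
    · intro x u' hx hxnr hpu
      rcases eq_or_ne x v with rfl | hxv
      · exact absurd hx (hwf.send_not_recv _ hsd)
      · have h2 : Function.update s.col v Colour.yellow x ≠ Colour.red := hxnr
        rw [Function.update_of_ne hxv] at h2
        exact hgrn u' (hC x u' hx h2 hpu)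
    · intro x w hx hxnr hm
      rcases eq_or_ne x v with rfl | hxv
      · exact absurd hx (hwf.send_not_recv _ hsd)
      · have h2 : Function.update s.col v Colour.yellow x ≠ Colour.red := hxnr
        rw [Function.update_of_ne hxv] at h2
        exact hnr w (hD x w hx h2 hm)
    · intro x r hx hxg hm
      rcases eq_or_ne x v with rfl | hxv
      · have h2 : Function.update s.col x Colour.yellow x = Colour.green := hxg
        rw [Function.update_self] at h2
        exact absurd h2 (by decide)
      · have h2 : Function.update s.col v Colour.yellow x = Colour.green := hxg
        rw [Function.update_of_ne hxv] at h2
        exact hnr r (hE x r hx h2 hm)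
    · intro x w hx hxg hm
      rcases eq_or_ne x v with rfl | hxv
      · exact absurd hx (hwf.send_not_recv _ hsd)
      · have h2 : Function.update s.col v Colour.yellow x = Colour.green := hxg
        rw [Function.update_of_ne hxv] at h2
        exact hgrn w (hF x w hx h2 hm)
  | recvYel hrc hred hm hwy hp hg =>
    rename_i v u w
    have hzg : s.col v ≠ Colour.green := by rw [hred]; decide
    have hgrn := upd_green (f := s.col) (z := v) (c := .yellow) (Or.inl hzg)
    have hnr := upd_ne_red (f := s.col) (z := v) (c := .yellow) (by decide)
    refine ⟨fun x hx => hgrn x (hA x hx), hB, hB', ?_, ?_, ?_, ?_⟩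
    · intro x u' hx hxnr hpu
      rcases eq_or_ne x v with rfl | hxv
      · have : u' = u := hwf.pred_unique hpu hp
        exact hgrn u' (by rw [this]; exact hg)
      · have h2 : Function.update s.col v Colour.yellow x ≠ Colour.red := hxnr
        rw [Function.update_of_ne hxv] at h2
        exact hgrn u' (hC x u' hx h2 hpu)
    · intro x w' hx hxnr hm'
      rcases eq_or_ne x v with rfl | hxv
      · have : w' = w := hwf.matched_unique_left hm' hm
        exact hnr w' (by rw [this, hwy]; decide)
      · have h2 : Function.update s.col v Colour.yellow x ≠ Colour.red := hxnr
        rw [Function.update_of_ne hxv] at h2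
        exact hnr w' (hD x w' hx h2 hm')
    · intro x r hx hxg hm'
      rcases eq_or_ne x v with rfl | hxv
      · exact absurd hrc (hwf.send_not_recv _ hx)
      · have h2 : Function.update s.col v Colour.yellow x = Colour.green := hxg
        rw [Function.update_of_ne hxv] at h2
        exact hnr r (hE x r hx h2 hm')
    · intro x w' hx hxg hm'
      rcases eq_or_ne x v with rfl | hxv
      · have h2 : Function.update s.col x Colour.yellow x = Colour.green := hxg
        rw [Function.update_self] at h2
        exact absurd h2 (by decide)
      · have h2 : Function.update s.col v Colour.yellow x = Colour.green := hxg
        rw [Function.update_of_ne hxv] at h2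
        exact hgrn w' (hF x w' hx h2 hm')
  | recvYelTok hrc hred hm hwy hpos =>
    rename_i v w
    rw [hB] at hpos
    exact absurd hpos (lt_irrefl 0)
  | sendGrn hsd hyel hm hry =>
    rename_i v r
    have hgrn := upd_green (f := s.col) (z := v) (c := .green) (Or.inr rfl)
    have hnr := upd_ne_red (f := s.col) (z := v) (c := .green) (by decide)
    refine ⟨fun x hx => hgrn x (hA x hx), hB, hB', ?_, ?_, ?_, ?_⟩
    · intro x u' hx hxnr hpu
      rcases eq_or_ne x v with rfl | hxv
      · exact absurd hx (hwf.send_not_recv _ hsd)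
      · have h2 : Function.update s.col v Colour.green x ≠ Colour.red := hxnr
        rw [Function.update_of_ne hxv] at h2
        exact hgrn u' (hC x u' hx h2 hpu)
    · intro x w hx hxnr hm'
      rcases eq_or_ne x v with rfl | hxv
      · exact absurd hx (hwf.send_not_recv _ hsd)
      · have h2 : Function.update s.col v Colour.green x ≠ Colour.red := hxnr
        rw [Function.update_of_ne hxv] at h2
        exact hnr w (hD x w hx h2 hm')
    · intro x r' hx hxg hm'
      rcases eq_or_ne x v with rfl | hxv
      · have : r' = r := hwf.matched_unique_right hm' hm
        exact hnr r' (by rw [this, hry]; decide)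
      · have h2 : Function.update s.col v Colour.green x = Colour.green := hxg
        rw [Function.update_of_ne hxv] at h2
        exact hnr r' (hE x r' hx h2 hm')
    · intro x w hx hxg hm'
      rcases eq_or_ne x v with rfl | hxv
      · exact absurd hx (hwf.send_not_recv _ hsd)
      · have h2 : Function.update s.col v Colour.green x = Colour.green := hxg
        rw [Function.update_of_ne hxv] at h2
        exact hgrn w (hF x w hx h2 hm')
  | recvGrn hrc hyel hp hg hm hwg =>
    rename_i v u w
    have hgrn := upd_green (f := s.col) (z := v) (c := .green) (Or.inr rfl)
    have hnr := upd_ne_red (f := s.col) (z := v) (c := .green) (by decide)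
    refine ⟨fun x hx => hgrn x (hA x hx), ?_, ?_, ?_, ?_, ?_, ?_⟩
    · intro i
      have : s.tok v = false := hB' v
      simp only [this, Bool.false_eq_true, if_false]
      exact hB i
    · intro x
      show Function.update s.tok v false x = false
      rcases eq_or_ne x v with rfl | h
      · rw [Function.update_self]
      · rw [Function.update_of_ne h]; exact hB' x
    · intro x u' hx hxnr hpu
      rcases eq_or_ne x v with rfl | hxv
      · have : u' = u := hwf.pred_unique hpu hp
        exact hgrn u' (by rw [this]; exact hg)
      · have h2 : Function.update s.col v Colour.green x ≠ Colour.red := hxnr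
        rw [Function.update_of_ne hxv] at h2
        exact hgrn u' (hC x u' hx h2 hpu)
    · intro x w' hx hxnr hm'
      rcases eq_or_ne x v with rfl | hxv
      · have : w' = w := hwf.matched_unique_left hm' hm
        exact hnr w' (by rw [this, hwg]; decide)
      · have h2 : Function.update s.col v Colour.green x ≠ Colour.red := hxnr
        rw [Function.update_of_ne hxv] at h2
        exact hnr w' (hD x w' hx h2 hm')
    · intro x r hx hxg hm'
      rcases eq_or_ne x v with rfl | hxv
      · exact absurd hrc (hwf.send_not_recv _ hx)
      · have h2 : Function.update s.col v Colour.green x = Colour.green := hxg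
        rw [Function.update_of_ne hxv] at h2
        exact hnr r (hE x r hx h2 hm')
    · intro x w' hx hxg hm'
      rcases eq_or_ne x v with rfl | hxv
      · have : w' = w := hwf.matched_unique_left hm' hm
        exact hgrn w' (by rw [this]; exact hwg)
      · have h2 : Function.update s.col v Colour.green x = Colour.green := hxg
        rw [Function.update_of_ne hxv] at h2
        exact hgrn w' (hF x w' hx h2 hm')
  | endYel hed hred hp hg =>
    rename_i v u
    have hzg : s.col v ≠ Colour.green := by rw [hred]; decide
    have hgrn := upd_green (f := s.col) (z := v) (c := .yellow) (Or.inl hzg)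
    have hnr := upd_ne_red (f := s.col) (z := v) (c := .yellow) (by decide)
    refine ⟨fun x hx => hgrn x (hA x hx), hB, hB', ?_, ?_, ?_, ?_⟩
    · intro x u' hx hxnr hpu
      rcases eq_or_ne x v with rfl | hxv
      · exact absurd hed (hwf.recv_not_end _ hx)
      · have h2 : Function.update s.col v Colour.yellow x ≠ Colour.red := hxnr
        rw [Function.update_of_ne hxv] at h2
        exact hgrn u' (hC x u' hx h2 hpu)
    · intro x w hx hxnr hm
      rcases eq_or_ne x v with rfl | hxv
      · exact absurd hed (hwf.recv_not_end _ hx)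
      · have h2 : Function.update s.col v Colour.yellow x ≠ Colour.red := hxnr
        rw [Function.update_of_ne hxv] at h2
        exact hnr w (hD x w hx h2 hm)
    · intro x r hx hxg hm
      rcases eq_or_ne x v with rfl | hxv
      · exact absurd hed (hwf.send_not_end _ hx)
      · have h2 : Function.update s.col v Colour.yellow x = Colour.green := hxg
        rw [Function.update_of_ne hxv] at h2
        exact hnr r (hE x r hx h2 hm)
    · intro x w hx hxg hm
      rcases eq_or_ne x v with rfl | hxv
      · exact absurd hed (hwf.recv_not_end _ hx)
      · have h2 : Function.update s.col v Colour.yellow x = Colour.green := hxg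
        rw [Function.update_of_ne hxv] at h2
        exact hgrn w (hF x w hx h2 hm)
  | endGrn hed hyel =>
    rename_i v
    have hgrn := upd_green (f := s.col) (z := v) (c := .green) (Or.inr rfl)
    have hnr := upd_ne_red (f := s.col) (z := v) (c := .green) (by decide)
    refine ⟨fun x hx => hgrn x (hA x hx), hB, hB', ?_, ?_, ?_, ?_⟩
    · intro x u' hx hxnr hpu
      rcases eq_or_ne x v with rfl | hxv
      · exact absurd hed (hwf.recv_not_end _ hx)
      · have h2 : Function.update s.col v Colour.green x ≠ Colour.red := hxnr
        rw [Function.update_of_ne hxv] at h2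
        exact hgrn u' (hC x u' hx h2 hpu)
    · intro x w hx hxnr hm
      rcases eq_or_ne x v with rfl | hxv
      · exact absurd hed (hwf.recv_not_end _ hx)
      · have h2 : Function.update s.col v Colour.green x ≠ Colour.red := hxnr
        rw [Function.update_of_ne hxv] at h2
        exact hnr w (hD x w hx h2 hm)
    · intro x r hx hxg hm
      rcases eq_or_ne x v with rfl | hxv
      · exact absurd hed (hwf.send_not_end _ hx)
      · have h2 : Function.update s.col v Colour.green x = Colour.green := hxg
        rw [Function.update_of_ne hxv] at h2
        exact hnr r (hE x r hx h2 hm)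
    · intro x w hx hxg hm
      rcases eq_or_ne x v with rfl | hxv
      · exact absurd hed (hwf.recv_not_end _ hx)
      · have h2 : Function.update s.col v Colour.green x = Colour.green := hxg
        rw [Function.update_of_ne hxv] at h2
        exact hgrn w (hF x w hx h2 hm)

private lemma inv_final (G : CommGraph V) (hwf : G.WF) :
    ∀ (l : List (Rule × St V)) (s : St V), ColInv G s → IsSeq G s l → ColInv G (finalSt s l)
  | [], s, hI, _ => by simpa [finalSt, states] using hI
  | p :: l, s, hI, hseq => by
    rw [finalSt_cons]
    exact inv_final G hwf l p.2 (inv_step G hwf hI hseq.1) hseq.2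

/-- In a maximal state satisfying the invariant, every non-green vertex either has a
non-green component predecessor, or is joined by a communication arc to a non-green
vertex that itself has a non-green component predecessor. -/
private lemma succ_exists (G : CommGraph V) (hwf : G.WF) {s : St V} (hI : ColInv G s)
    (hmax : MaximalFrom G s) {v : V} (hv : s.col v ≠ .green) :
    (∃ p, G.pred p v ∧ s.col p ≠ .green) ∨
    (∃ u, (G.matched v u ∨ G.matched u v) ∧ s.col u ≠ .green ∧
      ∃ p, G.pred p u ∧ s.col p ≠ .green) := by
  obtain ⟨hA, hB, hB', hC, hD, hE, hF⟩ := hI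
  rcases hwf.kinds v with hst | hsd | hrc | hed
  · exact absurd (hA v hst) hv
  · -- send vertex
    cases hcv : s.col v with
    | red =>
      obtain ⟨u, hu⟩ := hwf.has_pred v (fun h => hwf.start_not_send v h hsd)
      exact Or.inl ⟨u, hu, fun hug => hmax _ _ (Step.sendYel hsd hcv hu hug)⟩
    | yellow =>
      obtain ⟨r, hm⟩ := hwf.send_has_match v hsd
      cases hcr : s.col r with
      | red =>
        refine Or.inr ⟨r, Or.inl hm, by rw [hcr]; decide, ?_⟩
        have hrrecv := hwf.matched_recv hm
        obtain ⟨p, hp⟩ := hwf.has_pred r (fun h => hwf.start_not_recv r h hrrecv)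
        exact ⟨p, hp, fun hpg => hmax _ _ (Step.recvYel hrrecv hcr hm hcv hp hpg)⟩
      | yellow => exact (hmax _ _ (Step.sendGrn hsd hcv hm hcr)).elim
      | green => exact absurd (hF r v (hwf.matched_recv hm) hcr hm) hv
    | green => exact absurd hcv hv
  · -- receive vertex
    cases hcv : s.col v with
    | red =>
      obtain ⟨w, hm⟩ := hwf.recv_has_match v hrc
      have hws := hwf.matched_send hm
      cases hcw : s.col w with
      | red =>
        refine Or.inr ⟨w, Or.inr hm, by rw [hcw]; decide, ?_⟩
        obtain ⟨p, hp⟩ := hwf.has_pred w (fun h => hwf.start_not_send w h hws)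
        exact ⟨p, hp, fun hpg => hmax _ _ (Step.sendYel hws hcw hp hpg)⟩
      | yellow =>
        obtain ⟨u, hu⟩ := hwf.has_pred v (fun h => hwf.start_not_recv v h hrc)
        exact Or.inl ⟨u, hu, fun hug => hmax _ _ (Step.recvYel hrc hcv hm hcw hu hug)⟩
      | green => exact absurd hcv (hE w v hws hcw hm)
    | yellow =>
      exfalso
      obtain ⟨w, hm⟩ := hwf.recv_has_match v hrc
      have hws := hwf.matched_send hm
      have hvnr : s.col v ≠ Colour.red := by rw [hcv]; decide
      cases hcw : s.col w with
      | red => exact hD v w hrc hvnr hm hcw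
      | yellow => exact hmax _ _ (Step.sendGrn hws hcw hm hcv)
      | green =>
        obtain ⟨u, hu⟩ := hwf.has_pred v (fun h => hwf.start_not_recv v h hrc)
        exact hmax _ _ (Step.recvGrn hrc hcv hu (hC v u hrc hvnr hu) hm hcw)
    | green => exact absurd hcv hv
  · -- end vertex
    cases hcv : s.col v with
    | red =>
      obtain ⟨u, hu⟩ := hwf.has_pred v (fun h => hwf.start_not_end v h hed)
      exact Or.inl ⟨u, hu, fun hug => hmax _ _ (Step.endYel hed hcv hu hug)⟩
    | yellow => exact (hmax _ _ (Step.endGrn hed hcv)).elim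
    | green => exact absurd hcv hv

end AcyclicProof

/-- **Lemma.** If `G` is a communication graph whose dependency graph is acyclic,
then no colouring sequence on `G` deadlocks (with zero tokens): every maximal
colouring sequence completes. -/
theorem acyclic_dependency_no_deadlock {V : Type} [DecidableEq V] [Fintype V]
    (G : CommGraph V) (hwf : G.WF) (hacyc : ¬ DepCycle G) :
    ∀ l, IsSeq G (init G fun _ => 0) l →
      MaximalFrom G (finalSt (init G fun _ => 0) l) →
      Completes (finalSt (init G fun _ => 0) l) := by
  intro l hseq hmax
  set s := finalSt (init G fun _ => 0) l with hsdef
  have hinv : ColInv G s := inv_final G hwf l _ (inv_init G hwf) hseq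
  intro v0
  by_contra hv0
  -- choice of a non-green successor, preferring component predecessors
  have key : ∀ v, ∃ u, s.col v ≠ Colour.green →
      (s.col u ≠ Colour.green ∧
        (G.pred u v ∨ ((G.matched v u ∨ G.matched u v) ∧
          (¬ ∃ p, G.pred p v ∧ s.col p ≠ Colour.green) ∧
          ∃ p, G.pred p u ∧ s.col p ≠ Colour.green))) := by
    intro v
    by_cases hv : s.col v ≠ Colour.green
    · by_cases hpred : ∃ p, G.pred p v ∧ s.col p ≠ Colour.green
      · obtain ⟨p, hp, hpg⟩ := hpred
        exact ⟨p, fun _ => ⟨hpg, Or.inl hp⟩⟩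
      · rcases succ_exists G hwf hinv hmax hv with h | ⟨u, hcm, hug, hupred⟩
        · exact absurd h hpred
        · exact ⟨u, fun _ => ⟨hug, Or.inr ⟨hcm, hpred, hupred⟩⟩⟩
    · exact ⟨v, fun h => absurd h hv⟩
  choose g hg using key
  have hng : ∀ n, s.col (g^[n] v0) ≠ Colour.green := by
    intro n
    induction n with
    | zero => simpa using hv0
    | succ n ih => rw [Function.iterate_succ_apply']; exact (hg _ ih).1
  -- if the step out of x uses a communication arc, the next step is a process arc
  have hP3 : ∀ x, s.col x ≠ Colour.green →
      (G.matched x (g x) ∨ G.matched (g x) x) → G.pred (g (g x)) (g x) := by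
    intro x hx hcm
    rcases (hg x hx).2 with hp | ⟨_, hnp, p, hpp, hpg⟩
    · exfalso
      rcases hcm with h | h
      · exact hwf.matched_comp h (hwf.pred_comp hp).symm
      · exact hwf.matched_comp h (hwf.pred_comp hp)
    · rcases (hg (g x) (hg x hx).1).2 with hp' | ⟨_, hnp', _⟩
      · exact hp'
      · exact absurd ⟨p, hpp, hpg⟩ hnp'
  -- pigeonhole: the iterates repeat
  obtain ⟨a, b, hab, habeq⟩ := Fintype.exists_ne_map_eq_of_card_lt
      (fun n : Fin (Fintype.card V + 1) => g^[(n : ℕ)] v0) (by simp)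
  obtain ⟨i, j, hij, hcij⟩ : ∃ i j : ℕ, i < j ∧ g^[i] v0 = g^[j] v0 := by
    rcases lt_or_gt_of_ne hab with h | h
    · exact ⟨a, b, h, habeq⟩
    · exact ⟨b, a, h, habeq.symm⟩
  refine hacyc ⟨j - i, fun n => g^[i + n] v0, by omega, ?_, ?_, ?_⟩
  · intro n
    show g^[i + (n + (j - i))] v0 = g^[i + n] v0
    have h1 : i + (n + (j - i)) = n + j := by omega
    have h2 : i + n = n + i := by omega
    rw [h1, h2, Function.iterate_add_apply, Function.iterate_add_apply, ← hcij]
  · intro n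
    show HStep G (g^[i + n] v0) (g^[i + (n + 1)] v0)
    rw [show i + (n + 1) = (i + n) + 1 by omega, Function.iterate_succ_apply']
    rcases (hg _ (hng (i + n))).2 with hp | ⟨hcm, _⟩
    · exact Or.inl hp
    · exact Or.inr hcm
  · rintro n ⟨hcyc, hcm⟩
    have hcm' : G.matched (g^[i + n] v0) (g^[i + (n + 1)] v0) ∨
        G.matched (g^[i + (n + 1)] v0) (g^[i + n] v0) := hcm
    have hcyc' : g^[i + (n + 2)] v0 = g^[i + n] v0 := hcyc
    rw [show i + (n + 1) = (i + n) + 1 by omega, Function.iterate_succ_apply'] at hcm'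
    rw [show i + (n + 2) = ((i + n) + 1) + 1 by omega, Function.iterate_succ_apply',
      Function.iterate_succ_apply'] at hcyc'
    set x := g^[i + n] v0 with hxdef
    have hp2 : G.pred (g (g x)) (g x) := hP3 x (hng (i + n)) hcm'
    have hcc : G.comp (g (g x)) = G.comp (g x) := hwf.pred_comp hp2
    rw [hcyc'] at hcc
    rcases hcm' with h | h
    · exact hwf.matched_comp h hcc
    · exact hwf.matched_comp h hcc.symm
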